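/- Let A be an element of SL₂(ℤ) with |Tr(A)| > 2, and let T = [[1,1],[0,1]] and B = [[1,0],[1,1]] in SL₂(ℤ). Then there exist a sign ε ∈ {1, −1}, an integer n ≥ 1, and positive integers a₁, b₁, a₂, b₂, …, aₙ, bₙ such that ε·A is conjugate in SL₂(ℤ) to the product T^{a₁}·B^{b₁}·T^{a₂}·B^{b₂}·⋯·T^{aₙ}·B^{bₙ}. -/

import Mathlib

/-- The matrix `T = [[1,1],[0,1]]` in `SL₂(ℤ)`. -/
noncomputable def Tmat : Matrix.SpecialLinearGroup (Fin 2) ℤ :=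
  ⟨!![1, 1; 0, 1], by norm_num [Matrix.det_fin_two_of]⟩

/-- The matrix `B = [[1,0],[1,1]]` in `SL₂(ℤ)`. -/
noncomputable def Bmat : Matrix.SpecialLinearGroup (Fin 2) ℤ :=
  ⟨!![1, 0; 1, 1], by norm_num [Matrix.det_fin_two_of]⟩

abbrev SL2 := Matrix.SpecialLinearGroup (Fin 2) ℤ

noncomputable def Smat : SL2 := ⟨!![0, -1; 1, 0], by norm_num [Matrix.det_fin_two_of]⟩

namespace LR


lemma det_entries (M : SL2) : M.1 0 0 * M.1 1 1 - M.1 0 1 * M.1 1 0 = 1 := by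
  have := M.2; rwa [Matrix.det_fin_two] at this

lemma conj_coe (P M : SL2) :
    ((P * M * P⁻¹ : SL2) : Matrix (Fin 2) (Fin 2) ℤ) = P.1 * M.1 * (P.1).adjugate := by
  simp [Matrix.SpecialLinearGroup.coe_inv]

lemma conj_S (M : SL2) :
    ((Smat * M * Smat⁻¹ : SL2) : Matrix (Fin 2) (Fin 2) ℤ)
      = !![M.1 1 1, -(M.1 1 0); -(M.1 0 1), M.1 0 0] := by
  rw [conj_coe, Matrix.eta_fin_two M.1]
  simp [Smat, Matrix.adjugate_fin_two, Matrix.mul_fin_two]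

lemma conj_T (M : SL2) :
    ((Tmat * M * Tmat⁻¹ : SL2) : Matrix (Fin 2) (Fin 2) ℤ)
      = !![M.1 0 0 + M.1 1 0, M.1 0 1 + M.1 1 1 - M.1 0 0 - M.1 1 0;
           M.1 1 0, M.1 1 1 - M.1 1 0] := by
  rw [conj_coe, Matrix.eta_fin_two M.1]
  simp [Tmat, Matrix.adjugate_fin_two, Matrix.mul_fin_two]
  ring_nf
  exact ⟨trivial, trivial⟩

lemma conj_Tinv (M : SL2) :
    ((Tmat⁻¹ * M * Tmat : SL2) : Matrix (Fin 2) (Fin 2) ℤ)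
      = !![M.1 0 0 - M.1 1 0, M.1 0 0 + M.1 0 1 - M.1 1 0 - M.1 1 1;
           M.1 1 0, M.1 1 0 + M.1 1 1] := by
  have h : (Tmat⁻¹ * M * Tmat : SL2) = Tmat⁻¹ * M * (Tmat⁻¹)⁻¹ := by group
  rw [h, conj_coe, Matrix.eta_fin_two M.1]
  have hT : ((Tmat⁻¹ : SL2) : Matrix (Fin 2) (Fin 2) ℤ) = !![1,-1;0,1] := by
    rw [Matrix.SpecialLinearGroup.coe_inv]; simp [Tmat, Matrix.adjugate_fin_two]
  rw [hT]
  simp [Matrix.adjugate_fin_two, Matrix.mul_fin_two]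
  ring_nf
  exact ⟨trivial, trivial⟩

lemma conj_B (M : SL2) :
    ((Bmat * M * Bmat⁻¹ : SL2) : Matrix (Fin 2) (Fin 2) ℤ)
      = !![M.1 0 0 - M.1 0 1, M.1 0 1;
           M.1 0 0 + M.1 1 0 - M.1 0 1 - M.1 1 1, M.1 0 1 + M.1 1 1] := by
  rw [conj_coe, Matrix.eta_fin_two M.1]
  simp [Bmat, Matrix.adjugate_fin_two, Matrix.mul_fin_two]
  ring_nf
  exact ⟨trivial, trivial⟩

lemma conj_Binv (M : SL2) :
    ((Bmat⁻¹ * M * Bmat : SL2) : Matrix (Fin 2) (Fin 2) ℤ)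
      = !![M.1 0 0 + M.1 0 1, M.1 0 1;
           M.1 1 0 + M.1 1 1 - M.1 0 0 - M.1 0 1, M.1 1 1 - M.1 0 1] := by
  have h : (Bmat⁻¹ * M * Bmat : SL2) = Bmat⁻¹ * M * (Bmat⁻¹)⁻¹ := by group
  rw [h, conj_coe, Matrix.eta_fin_two M.1]
  have hB : ((Bmat⁻¹ : SL2) : Matrix (Fin 2) (Fin 2) ℤ) = !![1,0;-1,1] := by
    rw [Matrix.SpecialLinearGroup.coe_inv]; simp [Bmat, Matrix.adjugate_fin_two]
  rw [hB]
  simp [Matrix.adjugate_fin_two, Matrix.mul_fin_two]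
  ring_nf
  exact ⟨trivial, trivial⟩

lemma trace_isConj {M N : SL2} (h : IsConj M N) :
    N.1 0 0 + N.1 1 1 = M.1 0 0 + M.1 1 1 := by
  obtain ⟨P, hP⟩ := isConj_iff.mp h
  have key : (N : Matrix (Fin 2) (Fin 2) ℤ).trace = (M : Matrix (Fin 2) (Fin 2) ℤ).trace := by
    rw [← hP]
    calc ((P * M * P⁻¹ : SL2) : Matrix (Fin 2) (Fin 2) ℤ).trace
        = (P.1 * M.1 * (P.1).adjugate).trace := by
          simp [Matrix.SpecialLinearGroup.coe_inv]
      _ = ((P.1).adjugate * (P.1 * M.1)).trace := Matrix.trace_mul_comm _ _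
      _ = (((P.1).adjugate * P.1) * M.1).trace := by rw [Matrix.mul_assoc]
      _ = (M : Matrix (Fin 2) (Fin 2) ℤ).trace := by
          rw [Matrix.adjugate_mul, P.2, one_smul, Matrix.one_mul]
  rw [Matrix.trace_fin_two, Matrix.trace_fin_two] at key
  exact key

lemma b_ne (M : SL2) (ht : 3 ≤ M.1 0 0 + M.1 1 1) : M.1 0 1 ≠ 0 ∧ M.1 1 0 ≠ 0 := by
  have hd := det_entries M
  constructor <;> intro h0 <;> rw [h0] at hd <;> simp at hd <;>
    rcases Int.mul_eq_one_iff_eq_one_or_neg_one.mp hd with ⟨h1,h2⟩|⟨h1,h2⟩ <;> omega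

lemma diag_pos (M : SL2) (ht : 3 ≤ M.1 0 0 + M.1 1 1) (hbc : 1 ≤ M.1 0 1 * M.1 1 0) :
    1 ≤ M.1 0 0 ∧ 1 ≤ M.1 1 1 := by
  have hd := det_entries M
  have had : 2 ≤ M.1 0 0 * M.1 1 1 := by omega
  constructor <;> nlinarith [sq_nonneg (M.1 0 0 - M.1 1 1), sq_nonneg (M.1 0 0 + M.1 1 1)]

/-- if both off-diagonal entries are negative, conjugating by S gives an all-positive matrix -/
lemma posify_neg (M : SL2) (ht : 3 ≤ M.1 0 0 + M.1 1 1)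
    (hb : M.1 0 1 < 0) (hc : M.1 1 0 < 0) :
    ∃ N : SL2, (∀ i j, 1 ≤ N.1 i j) ∧ IsConj M N := by
  refine ⟨Smat * M * Smat⁻¹, ?_, isConj_iff.mpr ⟨Smat, rfl⟩⟩
  have e := conj_S M
  have hbc : 1 ≤ M.1 0 1 * M.1 1 0 := by nlinarith
  obtain ⟨ha, hd⟩ := diag_pos M ht hbc
  intro i j; fin_cases i <;> fin_cases j <;> rw [e] <;> simp <;> omega

/-- one reduction step for a mixed-sign matrix with d - a > 0 -/
lemma step (M : SL2) (ht : 3 ≤ M.1 0 0 + M.1 1 1) (hs : 0 < M.1 1 1 - M.1 0 0)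
    (hmix : M.1 0 1 * M.1 1 0 < 0) :
    (∃ N : SL2, (∀ i j, 1 ≤ N.1 i j) ∧ IsConj M N) ∨
    (∃ M₂ : SL2, IsConj M M₂ ∧
      (M₂.1 0 1).natAbs + (M₂.1 1 0).natAbs < (M.1 0 1).natAbs + (M.1 1 0).natAbs) := by
  have hd := det_entries M
  obtain ⟨hb0, hc0⟩ := b_ne M ht
  rcases hb0.lt_or_gt with hb | hb
  · -- b < 0, hence c > 0
    have hc : 0 < M.1 1 0 := by nlinarith
    rcases le_or_gt (M.1 1 1 - M.1 0 0) (-(M.1 0 1)) with hcase | hcase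
    · -- s ≤ -b : conjugate by T, decreases |b|
      set M₂ := Tmat * M * Tmat⁻¹ with hM₂
      have hconj : IsConj M M₂ := isConj_iff.mpr ⟨Tmat, rfl⟩
      have e := conj_T M
      have eb : M₂.1 0 1 = M.1 0 1 + M.1 1 1 - M.1 0 0 - M.1 1 0 := by rw [hM₂, e]; rfl
      have ec : M₂.1 1 0 = M.1 1 0 := by rw [hM₂, e]; rfl
      -- s ≥ 4c + 1
      have hs2 : (M.1 1 1 - M.1 0 0) * (M.1 1 1 - M.1 0 0)
          = (M.1 0 0 + M.1 1 1) * (M.1 0 0 + M.1 1 1) - 4 - 4 * (M.1 0 1 * M.1 1 0) := by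
        linear_combination (-4 : ℤ) * hd
      have hsc : 4 * M.1 1 0 + 1 ≤ M.1 1 1 - M.1 0 0 := by nlinarith
      right
      exact ⟨M₂, hconj, by omega⟩
    · -- s > -b : conjugate by B
      set M₂ := Bmat * M * Bmat⁻¹ with hM₂
      have hconj : IsConj M M₂ := isConj_iff.mpr ⟨Bmat, rfl⟩
      have e := conj_B M
      have eb : M₂.1 0 1 = M.1 0 1 := by rw [hM₂, e]; rfl
      have ec : M₂.1 1 0 = M.1 0 0 + M.1 1 0 - M.1 0 1 - M.1 1 1 := by rw [hM₂, e]; rfl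
      have ht₂ : 3 ≤ M₂.1 0 0 + M₂.1 1 1 := by rw [trace_isConj hconj]; exact ht
      have hc₂ := (b_ne M₂ ht₂).2
      rcases hc₂.lt_or_gt with h2 | h2
      · -- both entries of M₂ negative
        left
        obtain ⟨N, hN, hN2⟩ := posify_neg M₂ ht₂ (by omega) h2
        exact ⟨N, hN, hconj.trans hN2⟩
      · right
        exact ⟨M₂, hconj, by omega⟩
  · -- b > 0, hence c < 0
    have hc : M.1 1 0 < 0 := by nlinarith
    rcases le_or_gt (M.1 1 1 - M.1 0 0) (M.1 0 1) with hcase | hcase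
    · -- s ≤ b : conjugate by T⁻¹, which decreases b
      set M₂ := Tmat⁻¹ * M * Tmat with hM₂
      have hconj : IsConj M M₂ := isConj_iff.mpr ⟨Tmat⁻¹, by rw [inv_inv]⟩
      have e := conj_Tinv M
      have eb : M₂.1 0 1 = M.1 0 0 + M.1 0 1 - M.1 1 0 - M.1 1 1 := by rw [hM₂, e]; rfl
      have ec : M₂.1 1 0 = M.1 1 0 := by rw [hM₂, e]; rfl
      have hs2 : (M.1 1 1 - M.1 0 0) * (M.1 1 1 - M.1 0 0)
          = (M.1 0 0 + M.1 1 1) * (M.1 0 0 + M.1 1 1) - 4 - 4 * (M.1 0 1 * M.1 1 0) := by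
        linear_combination (-4 : ℤ) * hd
      have hsc : 4 * (-(M.1 1 0)) + 1 ≤ M.1 1 1 - M.1 0 0 := by nlinarith
      right
      exact ⟨M₂, hconj, by omega⟩
    · -- s > b : conjugate by B⁻¹
      set M₂ := Bmat⁻¹ * M * Bmat with hM₂
      have hconj : IsConj M M₂ := isConj_iff.mpr ⟨Bmat⁻¹, by rw [inv_inv]⟩
      have e := conj_Binv M
      have eb : M₂.1 0 1 = M.1 0 1 := by rw [hM₂, e]; rfl
      have ec : M₂.1 1 0 = M.1 1 0 + M.1 1 1 - M.1 0 0 - M.1 0 1 := by rw [hM₂, e]; rfl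
      have ht₂ : 3 ≤ M₂.1 0 0 + M₂.1 1 1 := by rw [trace_isConj hconj]; exact ht
      have hc₂ := (b_ne M₂ ht₂).2
      rcases hc₂.lt_or_gt with h2 | h2
      · -- c₂ < 0 : decrease
        right
        exact ⟨M₂, hconj, by omega⟩
      · -- c₂ > 0 : M₂ has both off-diagonal entries positive, terminal
        left
        have hb₂ : 0 < M₂.1 0 1 := by omega
        have hbc₂ : 1 ≤ M₂.1 0 1 * M₂.1 1 0 := by nlinarith
        obtain ⟨ha₂, hd₂⟩ := diag_pos M₂ ht₂ hbc₂
        refine ⟨M₂, ?_, hconj⟩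
        intro i j; fin_cases i <;> fin_cases j <;> simpa using by omega

lemma reduce : ∀ (μ : ℕ) (M : SL2), 3 ≤ M.1 0 0 + M.1 1 1 →
    (M.1 0 1).natAbs + (M.1 1 0).natAbs ≤ μ →
    ∃ N : SL2, (∀ i j, 1 ≤ N.1 i j) ∧ IsConj M N := by
  intro μ
  induction μ using Nat.strong_induction_on with
  | _ μ IH =>
  intro M ht hm
  have hd := det_entries M
  obtain ⟨hb0, hc0⟩ := b_ne M ht
  rcases lt_or_ge (M.1 0 1 * M.1 1 0) 0 with hmix | hpos
  · -- mixed sign case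
    have hs0 : M.1 1 1 - M.1 0 0 ≠ 0 := by
      intro h0
      nlinarith
    rcases hs0.lt_or_gt with hs | hs
    · -- normalize by S first
      set M₁ := Smat * M * Smat⁻¹ with hM₁
      have hconj : IsConj M M₁ := isConj_iff.mpr ⟨Smat, rfl⟩
      have e := conj_S M
      have ea : M₁.1 0 0 = M.1 1 1 := by rw [hM₁, e]; rfl
      have eb : M₁.1 0 1 = -(M.1 1 0) := by rw [hM₁, e]; rfl
      have ec : M₁.1 1 0 = -(M.1 0 1) := by rw [hM₁, e]; rfl
      have ed : M₁.1 1 1 = M.1 0 0 := by rw [hM₁, e]; rfl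
      have ht₁ : 3 ≤ M₁.1 0 0 + M₁.1 1 1 := by omega
      have hs₁ : 0 < M₁.1 1 1 - M₁.1 0 0 := by omega
      have hmix₁ : M₁.1 0 1 * M₁.1 1 0 < 0 := by rw [eb, ec]; nlinarith
      rcases step M₁ ht₁ hs₁ hmix₁ with ⟨N, hN, hN2⟩ | ⟨M₂, h2, hlt⟩
      · exact ⟨N, hN, hconj.trans hN2⟩
      · have ht₂ : 3 ≤ M₂.1 0 0 + M₂.1 1 1 := by rw [trace_isConj h2]; omega
        obtain ⟨N, hN, hN2⟩ := IH ((M₂.1 0 1).natAbs + (M₂.1 1 0).natAbs)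
          (by omega) M₂ ht₂ le_rfl
        exact ⟨N, hN, (hconj.trans h2).trans hN2⟩
    · rcases step M ht hs hmix with ⟨N, hN, hN2⟩ | ⟨M₂, h2, hlt⟩
      · exact ⟨N, hN, hN2⟩
      · have ht₂ : 3 ≤ M₂.1 0 0 + M₂.1 1 1 := by rw [trace_isConj h2]; exact ht
        obtain ⟨N, hN, hN2⟩ := IH ((M₂.1 0 1).natAbs + (M₂.1 1 0).natAbs)
          (by omega) M₂ ht₂ le_rfl
        exact ⟨N, hN, h2.trans hN2⟩
  · -- same sign case
    have hbc : 1 ≤ M.1 0 1 * M.1 1 0 := by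
      rcases hpos.lt_or_eq with h | h
      · omega
      · exact absurd h.symm (mul_ne_zero hb0 hc0)
    rcases lt_or_ge (M.1 0 1) 0 with hb | hb
    · have hc : M.1 1 0 < 0 := by nlinarith
      exact posify_neg M ht hb hc
    · have hb' : 0 < M.1 0 1 := lt_of_le_of_ne hb (Ne.symm hb0)
      have hc' : 0 < M.1 1 0 := by nlinarith
      obtain ⟨ha, hdd⟩ := diag_pos M ht hbc
      refine ⟨M, ?_, IsConj.refl M⟩
      intro i j; fin_cases i <;> fin_cases j <;> simpa using by omega

noncomputable def wprod (w : List Bool) : SL2 :=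
  (w.map fun x => if x then Tmat else Bmat).prod

@[simp] lemma wprod_nil : wprod [] = 1 := rfl

@[simp] lemma wprod_cons (x : Bool) (w : List Bool) :
    wprod (x :: w) = (if x then Tmat else Bmat) * wprod w := by
  simp [wprod]

@[simp] lemma wprod_append (u v : List Bool) : wprod (u ++ v) = wprod u * wprod v := by
  simp [wprod]

lemma Tpow_coe (n : ℕ) : ((Tmat ^ n : SL2) : Matrix (Fin 2) (Fin 2) ℤ) = !![1, (n:ℤ); 0, 1] := by
  induction n with
  | zero => simp [Matrix.one_fin_two]
  | succ n ih =>
    rw [pow_succ, Matrix.SpecialLinearGroup.coe_mul, ih]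
    simp [Tmat, Matrix.mul_fin_two]
    try ring_nf

lemma Bpow_coe (n : ℕ) : ((Bmat ^ n : SL2) : Matrix (Fin 2) (Fin 2) ℤ) = !![1, 0; (n:ℤ), 1] := by
  induction n with
  | zero => simp [Matrix.one_fin_two]
  | succ n ih =>
    rw [pow_succ, Matrix.SpecialLinearGroup.coe_mul, ih]
    simp [Bmat, Matrix.mul_fin_two]
    try ring_nf

lemma wprod_replicate_true (n : ℕ) : wprod (List.replicate n true) = Tmat ^ n := by
  simp [wprod, List.map_replicate, List.prod_replicate]

lemma wprod_replicate_false (n : ℕ) : wprod (List.replicate n false) = Bmat ^ n := by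
  simp [wprod, List.map_replicate, List.prod_replicate]

lemma Tinv_mul_coe (M : SL2) :
    ((Tmat⁻¹ * M : SL2) : Matrix (Fin 2) (Fin 2) ℤ)
      = !![M.1 0 0 - M.1 1 0, M.1 0 1 - M.1 1 1; M.1 1 0, M.1 1 1] := by
  have hT : ((Tmat⁻¹ : SL2) : Matrix (Fin 2) (Fin 2) ℤ) = !![1,-1;0,1] := by
    rw [Matrix.SpecialLinearGroup.coe_inv]; simp [Tmat, Matrix.adjugate_fin_two]
  rw [Matrix.SpecialLinearGroup.coe_mul, hT, Matrix.eta_fin_two M.1]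
  simp [Matrix.mul_fin_two]
  ring_nf
  exact ⟨trivial, trivial⟩

lemma Binv_mul_coe (M : SL2) :
    ((Bmat⁻¹ * M : SL2) : Matrix (Fin 2) (Fin 2) ℤ)
      = !![M.1 0 0, M.1 0 1; M.1 1 0 - M.1 0 0, M.1 1 1 - M.1 0 1] := by
  have hB : ((Bmat⁻¹ : SL2) : Matrix (Fin 2) (Fin 2) ℤ) = !![1,0;-1,1] := by
    rw [Matrix.SpecialLinearGroup.coe_inv]; simp [Bmat, Matrix.adjugate_fin_two]
  rw [Matrix.SpecialLinearGroup.coe_mul, hB, Matrix.eta_fin_two M.1]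
  simp [Matrix.mul_fin_two]
  ring_nf
  exact ⟨trivial, trivial⟩

/-- every nonnegative matrix in SL2Z is a word in T and B -/
lemma word_exists : ∀ (μ : ℕ) (M : SL2), (∀ i j, 0 ≤ M.1 i j) →
    (M.1 0 0 + M.1 0 1 + M.1 1 0 + M.1 1 1).toNat ≤ μ →
    ∃ w : List Bool, M = wprod w := by
  intro μ
  induction μ using Nat.strong_induction_on with
  | _ μ IH =>
  intro M hnn hm
  have hd := det_entries M
  have h00 := hnn 0 0; have h01 := hnn 0 1; have h10 := hnn 1 0; have h11 := hnn 1 1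
  rcases eq_or_lt_of_le h10 with hc | hc
  · -- c = 0 : M = T^b
    have had : M.1 0 0 * M.1 1 1 = 1 := by
      have := hd; rw [← hc, mul_zero, sub_zero] at this; exact this
    obtain ⟨ha, hdd⟩ : M.1 0 0 = 1 ∧ M.1 1 1 = 1 := by
      rcases Int.mul_eq_one_iff_eq_one_or_neg_one.mp had with ⟨h1,h2⟩|⟨h1,h2⟩ <;> [exact ⟨h1,h2⟩; omega]
    refine ⟨List.replicate (M.1 0 1).toNat true, ?_⟩
    rw [wprod_replicate_true]
    apply Subtype.ext
    rw [Tpow_coe, Int.toNat_of_nonneg h01]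
    ext i j
    fin_cases i <;> fin_cases j <;> simp <;> omega
  rcases eq_or_lt_of_le h01 with hb | hb
  · -- b = 0 : M = B^c
    have had : M.1 0 0 * M.1 1 1 = 1 := by
      have := hd; rw [← hb, zero_mul, sub_zero] at this; exact this
    obtain ⟨ha, hdd⟩ : M.1 0 0 = 1 ∧ M.1 1 1 = 1 := by
      rcases Int.mul_eq_one_iff_eq_one_or_neg_one.mp had with ⟨h1,h2⟩|⟨h1,h2⟩ <;> [exact ⟨h1,h2⟩; omega]
    refine ⟨List.replicate (M.1 1 0).toNat false, ?_⟩
    rw [wprod_replicate_false]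
    apply Subtype.ext
    rw [Bpow_coe, Int.toNat_of_nonneg h10]
    ext i j
    fin_cases i <;> fin_cases j <;> simp <;> omega
  · -- b ≥ 1 and c ≥ 1
    have key : (M.1 1 0 ≤ M.1 0 0 ∧ M.1 1 1 ≤ M.1 0 1) ∨
        (M.1 0 0 ≤ M.1 1 0 ∧ M.1 0 1 ≤ M.1 1 1) := by
      rcases le_or_gt (M.1 1 0) (M.1 0 0) with h1 | h1 <;>
        rcases le_or_gt (M.1 1 1) (M.1 0 1) with h2 | h2
      · exact Or.inl ⟨h1, h2⟩
      · right
        constructor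
        · nlinarith
        · omega
      · exfalso; nlinarith
      · exact Or.inr ⟨h1.le, h2.le⟩
    rcases key with ⟨h1, h2⟩ | ⟨h1, h2⟩
    · -- factor T
      set M₂ := Tmat⁻¹ * M with hM₂
      have e := Tinv_mul_coe M
      have e00 : M₂.1 0 0 = M.1 0 0 - M.1 1 0 := by rw [hM₂, e]; rfl
      have e01 : M₂.1 0 1 = M.1 0 1 - M.1 1 1 := by rw [hM₂, e]; rfl
      have e10 : M₂.1 1 0 = M.1 1 0 := by rw [hM₂, e]; rfl
      have e11 : M₂.1 1 1 = M.1 1 1 := by rw [hM₂, e]; rfl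
      have hnn₂ : ∀ i j, 0 ≤ M₂.1 i j := by
        intro i j; fin_cases i <;> fin_cases j <;> simpa [e00, e01, e10, e11] using by omega
      obtain ⟨w, hw⟩ := IH ((M₂.1 0 0 + M₂.1 0 1 + M₂.1 1 0 + M₂.1 1 1).toNat)
        (by omega) M₂ hnn₂ le_rfl
      refine ⟨true :: w, ?_⟩
      rw [wprod_cons, if_pos rfl, ← hw, hM₂]
      group
    · -- factor B
      set M₂ := Bmat⁻¹ * M with hM₂
      have e := Binv_mul_coe M
      have e00 : M₂.1 0 0 = M.1 0 0 := by rw [hM₂, e]; rfl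
      have e01 : M₂.1 0 1 = M.1 0 1 := by rw [hM₂, e]; rfl
      have e10 : M₂.1 1 0 = M.1 1 0 - M.1 0 0 := by rw [hM₂, e]; rfl
      have e11 : M₂.1 1 1 = M.1 1 1 - M.1 0 1 := by rw [hM₂, e]; rfl
      have hnn₂ : ∀ i j, 0 ≤ M₂.1 i j := by
        intro i j; fin_cases i <;> fin_cases j <;> simpa [e00, e01, e10, e11] using by omega
      obtain ⟨w, hw⟩ := IH ((M₂.1 0 0 + M₂.1 0 1 + M₂.1 1 0 + M₂.1 1 1).toNat)
        (by omega) M₂ hnn₂ le_rfl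
      refine ⟨false :: w, ?_⟩
      rw [wprod_cons, if_neg (by simp), ← hw, hM₂]
      group

lemma isConj_mul_comm' {G : Type*} [Group G] (x y : G) : IsConj (x * y) (y * x) :=
  isConj_iff.mpr ⟨x⁻¹, by group⟩

lemma split_trailing : ∀ w : List Bool, w.head? = some true → false ∈ w →
    ∃ u v, w = u ++ v ∧ (∀ x ∈ v, x = true) ∧ u.getLast? = some false := by
  intro w
  induction w using List.reverseRecOn with
  | nil => intro h; simp at h
  | append_singleton l x IH =>
    intro hh hf
    cases x with
    | false =>
      exact ⟨l ++ [false], [], by simp, by simp, by simp⟩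
    | true =>
      have hl : l ≠ [] := by
        rintro rfl
        simp at hf
      have hh' : l.head? = some true := by
        rw [List.head?_append, List.head?_eq_head hl] at hh
        rw [List.head?_eq_head hl]
        simpa [Option.or] using hh
      have hf' : false ∈ l := by
        rcases List.mem_append.mp hf with h | h
        · exact h
        · simp at h
      obtain ⟨u, v, h1, h2, h3⟩ := IH hh' hf'
      refine ⟨u, v ++ [true], by simp [h1], ?_, h3⟩
      intro x hx
      rcases List.mem_append.mp hx with h | h
      · exact h2 x h
      · simpa using h

lemma parse : ∀ (n : ℕ), ∀ (w : List Bool), w.length ≤ n → w.head? = some true →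
    w.getLast? = some false →
    ∃ L : List (ℕ × ℕ), L ≠ [] ∧ (∀ p ∈ L, 0 < p.1 ∧ 0 < p.2) ∧
      w = (L.map fun p => List.replicate p.1 true ++ List.replicate p.2 false).flatten := by
  intro n
  induction n using Nat.strong_induction_on with
  | _ n IH =>
  intro w hlen hh hl
  obtain ⟨w₀, rfl⟩ : ∃ w₀, w = true :: w₀ := by
    cases w with
    | nil => simp at hh
    | cons x w₀ => simp at hh; exact ⟨w₀, by rw [hh]⟩
  set w : List Bool := true :: w₀ with hw
  set t := w.takeWhile (fun x => x) with hts
  set r := w.dropWhile (fun x => x) with hrs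
  have hw1 : t ++ r = w := List.takeWhile_append_dropWhile
  have ht_rep : t = List.replicate t.length true := by
    apply List.eq_replicate_of_mem
    intro b hb
    simpa using List.mem_takeWhile_imp hb
  have ht_ne : t ≠ [] := by rw [hts, hw]; simp
  have hr_ne : r ≠ [] := by
    intro h0
    rw [h0, List.append_nil] at hw1
    have : false ∈ t := by
      rw [hw1]; exact List.mem_of_getLast? hl
    rw [ht_rep] at this
    simpa using List.eq_of_mem_replicate this
  have hr_head : r.head? = some false := by
    rw [List.head?_eq_head hr_ne]
    simpa using List.head_dropWhile_not (fun x => x) hr_ne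
  set t2 := r.takeWhile (fun x => !x) with ht2s
  set r2 := r.dropWhile (fun x => !x) with hr2s
  have hw2 : t2 ++ r2 = r := List.takeWhile_append_dropWhile
  have ht2_rep : t2 = List.replicate t2.length false := by
    apply List.eq_replicate_of_mem
    intro b hb
    simpa using List.mem_takeWhile_imp hb
  have ht2_ne : t2 ≠ [] := by
    rw [ht2s]
    cases hr : r with
    | nil => exact absurd hr hr_ne
    | cons y ys =>
      have hy : y = false := by
        rw [hr] at hr_head; simpa using hr_head
      rw [hy]; simp
  rcases List.eq_nil_or_concat r2 with hr2 | ⟨_, _, hr2ne⟩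
  · -- w = t ++ t2
    refine ⟨[(t.length, t2.length)], by simp, by simp [List.length_pos_iff, ht_ne, ht2_ne], ?_⟩
    simp only [List.map_cons, List.map_nil, List.flatten_cons, List.flatten_nil, List.append_nil]
    rw [← ht_rep, ← ht2_rep, ← hw1, ← hw2, hr2, List.append_nil]
  · have hr2_ne : r2 ≠ [] := by rw [hr2ne]; simp
    have hr2_head : r2.head? = some true := by
      have := List.head_dropWhile_not (fun x => !x) hr2_ne
      rw [List.head?_eq_head hr2_ne]
      simpa using this
    have hr2_last : r2.getLast? = some false := by
      have e : w.getLast? = r2.getLast? := by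
        conv_lhs => rw [← hw1, ← hw2, ← List.append_assoc]
        rw [List.getLast?_append, List.getLast?_eq_getLast hr2_ne]
        simp
      rw [← e]; exact hl
    have hlen2 : r2.length < n := by
      have l1 : w.length = t.length + t2.length + r2.length := by
        rw [← hw1, ← hw2]; simp [List.length_append]; omega
      have l2 : 1 ≤ t.length := List.length_pos_iff.mpr ht_ne
      have l3 : 1 ≤ t2.length := List.length_pos_iff.mpr ht2_ne
      omega
    obtain ⟨L2, hL2ne, hL2pos, hL2⟩ := IH r2.length hlen2 r2 le_rfl hr2_head hr2_last
    refine ⟨(t.length, t2.length) :: L2, by simp, ?_, ?_⟩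
    · intro p hp
      rcases List.mem_cons.mp hp with h | h
      · rw [h]; exact ⟨List.length_pos_iff.mpr ht_ne, List.length_pos_iff.mpr ht2_ne⟩
      · exact hL2pos p h
    · simp only [List.map_cons, List.flatten_cons]
      rw [← hL2, ← ht_rep, ← ht2_rep, List.append_assoc, hw2, hw1]


lemma rotate_good (w : List Bool) (ht : true ∈ w) (hf : false ∈ w) :
    ∃ w₂ : List Bool, IsConj (wprod w) (wprod w₂) ∧ w₂.head? = some true ∧
      w₂.getLast? = some false := by
  obtain ⟨s, t, rfl⟩ := List.append_of_mem ht
  have conj1 : IsConj (wprod (s ++ true :: t)) (wprod ((true :: t) ++ s)) := by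
    rw [wprod_append, wprod_append]; exact isConj_mul_comm' _ _
  set w1 := (true :: t) ++ s with hw1
  have hh1 : w1.head? = some true := rfl
  have hf1 : false ∈ w1 := by
    rcases List.mem_append.mp hf with h | h
    · exact List.mem_append.mpr (Or.inr h)
    · exact List.mem_append.mpr (Or.inl h)
  obtain ⟨u, v, he, hv, hu⟩ := split_trailing w1 hh1 hf1
  refine ⟨v ++ u, ?_, ?_, ?_⟩
  · refine conj1.trans ?_
    rw [he, wprod_append, wprod_append]
    exact isConj_mul_comm' _ _
  · cases hv0 : v with
    | nil =>
      have heq : u = w1 := by rw [hv0, List.append_nil] at he; exact he.symm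
      rw [List.nil_append, heq]; exact hh1
    | cons y ys =>
      have hy : y = true := hv y (by rw [hv0]; simp)
      simp [hy]
  · rw [List.getLast?_append, hu]
    simp

lemma blocks_prod : ∀ L : List (ℕ × ℕ),
    wprod (L.map fun p => List.replicate p.1 true ++ List.replicate p.2 false).flatten
      = (L.map fun p => Tmat ^ p.1 * Bmat ^ p.2).prod := by
  intro L
  induction L with
  | nil => simp [wprod]
  | cons p L ih =>
    simp only [List.map_cons, List.flatten_cons, wprod_append, ih, List.prod_cons]
    rw [wprod_replicate_true, wprod_replicate_false]

lemma pos_to_blocks (N : SL2) (hN : ∀ i j, 1 ≤ N.1 i j) :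
    ∃ L : List (ℕ × ℕ), L ≠ [] ∧ (∀ p ∈ L, 0 < p.1 ∧ 0 < p.2) ∧
      IsConj N ((L.map fun p => Tmat ^ p.1 * Bmat ^ p.2).prod) := by
  obtain ⟨w, hw⟩ := word_exists
    ((N.1 0 0 + N.1 0 1 + N.1 1 0 + N.1 1 1).toNat) N
    (fun i j => le_trans zero_le_one (hN i j)) le_rfl
  have htm : true ∈ w := by
    by_contra h
    have hall : ∀ x ∈ w, x = false := by
      intro x hx
      cases x
      · rfl
      · exact absurd hx h
    have hrep : w = List.replicate w.length false := List.eq_replicate_of_mem hall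
    rw [hrep, wprod_replicate_false] at hw
    have hz : N.1 0 1 = 0 := by rw [hw, Bpow_coe]; rfl
    have := hN 0 1
    omega
  have hfm : false ∈ w := by
    by_contra h
    have hall : ∀ x ∈ w, x = true := by
      intro x hx
      cases x
      · exact absurd hx h
      · rfl
    have hrep : w = List.replicate w.length true := List.eq_replicate_of_mem hall
    rw [hrep, wprod_replicate_true] at hw
    have hz : N.1 1 0 = 0 := by rw [hw, Tpow_coe]; rfl
    have := hN 1 0
    omega
  obtain ⟨w₂, hc, hh, hl⟩ := rotate_good w htm hfm
  obtain ⟨L, h1, h2, h3⟩ := parse w₂.length w₂ le_rfl hh hl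
  refine ⟨L, h1, h2, ?_⟩
  rw [← blocks_prod, ← h3, hw]
  exact hc

/-- main work lemma : trace at least 3 -/
lemma main_pos (M : SL2) (ht : 3 ≤ M.1 0 0 + M.1 1 1) :
    ∃ n : ℕ, 1 ≤ n ∧ ∃ a b : Fin n → ℕ,
      (∀ i, 0 < a i) ∧ (∀ i, 0 < b i) ∧
      IsConj M ((List.ofFn fun i : Fin n => Tmat ^ a i * Bmat ^ b i).prod) := by
  obtain ⟨N, hNpos, hNc⟩ := reduce ((M.1 0 1).natAbs + (M.1 1 0).natAbs) M ht le_rfl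
  obtain ⟨L, hL1, hL2, hL3⟩ := pos_to_blocks N hNpos
  refine ⟨L.length, by
      cases L with
      | nil => exact absurd rfl hL1
      | cons p L => simp, fun i => (L.get i).1, fun i => (L.get i).2, ?_, ?_, ?_⟩
  · exact fun i => (hL2 _ (List.get_mem L i)).1
  · exact fun i => (hL2 _ (List.get_mem L i)).2
  · have hofn : (List.ofFn fun i : Fin L.length => Tmat ^ (L.get i).1 * Bmat ^ (L.get i).2)
        = L.map fun p => Tmat ^ p.1 * Bmat ^ p.2 := by
      conv_rhs => rw [← List.ofFn_get L, List.map_ofFn]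
      rfl
    rw [hofn]
    exact hNc.trans hL3

end LR

/-- Every element of `SL₂(ℤ)` of trace of absolute value `> 2` is, up to sign, conjugate
to a product `T^{a₁} B^{b₁} ⋯ T^{aₙ} B^{bₙ}` with all `aᵢ, bᵢ` positive. -/
theorem stmt0 (A : Matrix.SpecialLinearGroup (Fin 2) ℤ)
    (hA : 2 < |Matrix.trace (A : Matrix (Fin 2) (Fin 2) ℤ)|) :
    ∃ ε : Matrix.SpecialLinearGroup (Fin 2) ℤ,
      ((ε : Matrix (Fin 2) (Fin 2) ℤ) = 1 ∨ (ε : Matrix (Fin 2) (Fin 2) ℤ) = -1) ∧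
      ∃ n : ℕ, 1 ≤ n ∧ ∃ a b : Fin n → ℕ,
        (∀ i, 0 < a i) ∧ (∀ i, 0 < b i) ∧
        IsConj (ε * A) ((List.ofFn fun i : Fin n => Tmat ^ a i * Bmat ^ b i).prod) := by
  rw [Matrix.trace_fin_two] at hA
  rcases abs_cases ((A : Matrix (Fin 2) (Fin 2) ℤ) 0 0 + (A : Matrix (Fin 2) (Fin 2) ℤ) 1 1)
    with ⟨he, _⟩ | ⟨he, _⟩
  · -- trace ≥ 3
    refine ⟨1, Or.inl (by simp), ?_⟩
    have h3 : 3 ≤ A.1 0 0 + A.1 1 1 := by omega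
    have := LR.main_pos A h3
    simpa using this
  · -- trace ≤ -3
    set ε : Matrix.SpecialLinearGroup (Fin 2) ℤ :=
      ⟨!![-1, 0; 0, -1], by norm_num [Matrix.det_fin_two_of]⟩ with hε
    have hcoe : (ε : Matrix (Fin 2) (Fin 2) ℤ) = -1 := by
      rw [hε]
      ext i j
      fin_cases i <;> fin_cases j <;> simp [Matrix.one_apply]
    refine ⟨ε, Or.inr hcoe, ?_⟩
    have hmul : ((ε * A : SL2) : Matrix (Fin 2) (Fin 2) ℤ) = -(A : Matrix (Fin 2) (Fin 2) ℤ) := by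
      rw [Matrix.SpecialLinearGroup.coe_mul, hcoe, neg_one_mul]
    have e00 : (ε * A : SL2).1 0 0 = -(A.1 0 0) := by rw [hmul]; rfl
    have e11 : (ε * A : SL2).1 1 1 = -(A.1 1 1) := by rw [hmul]; rfl
    have h3 : 3 ≤ (ε * A : SL2).1 0 0 + (ε * A : SL2).1 1 1 := by omega
    exact LR.main_pos (ε * A) h3
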